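/- Let T < 0 be a real number and let n ≥ 62 be an integer. Define c_q = ∫_0^∞ (1+(t−T)²)^{(5+2q−n)/2} dt for q = 0, 1, 2, and set a₀ = ((n+3)c₁ / (2(n−7)c₀)) · ( 3 + √( 9 − 8((n+7)(n−7)/((n+3)(n−9))) · c₀c₂/c₁² ) ). Then − (2(n+3)/(n−5)) c₀ a₀ + (3(n+3)(n+5)/((n−5)(n−7))) c₁ < 0. (This quantity is the value J(1) of the auxiliary function J at s = 1, so J(1) < 0.) -/

import Mathlib

open MeasureTheory

open Set Filter Topology

section JAux

lemma scalar1 (N C : ℝ) (hN : 62 ≤ N) (h1 : 1 ≤ C) (h2 : C ≤ 6/5) :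
    8*(N+3)*(N+7)*((N-8)*C+(N-9))^2 < 36*C*((N+1)*(N+5)*(N-9)*(N-10)) := by
  have hM : 0 ≤ N - 62 := by linarith
  have e1 : 0 < 36*((N+1)*(N+5)*(N-9)*(N-10)) - 8*(N+3)*(N+7)*(2*N-17)^2 := by
    nlinarith [pow_nonneg hM 4, pow_nonneg hM 3, pow_nonneg hM 2, hM]
  have e2 : 0 < 36*(6/5)*((N+1)*(N+5)*(N-9)*(N-10)) - 8*(N+3)*(N+7)*((N-8)*(6/5)+(N-9))^2 := by
    nlinarith [pow_nonneg hM 4, pow_nonneg hM 3, pow_nonneg hM 2, hM]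
  nlinarith [mul_nonneg (mul_nonneg (sub_nonneg.2 h1) (sub_nonneg.2 h2))
      (mul_nonneg (mul_nonneg (by linarith : (0:ℝ) ≤ 8*(N+3)) (by linarith : (0:ℝ) ≤ N+7)) (sq_nonneg (N-8))),
    mul_nonneg (sub_nonneg.2 h1) e2.le, mul_nonneg (sub_nonneg.2 h2) e1.le]

lemma scalar3 (N C : ℝ) (hN : 62 ≤ N) (hC : 6/5 ≤ C) :
    2*((N-7)*((N-8)*C+(N-5))) ≤ ((N-8)*C+(N-9))*((N-6)*C+(N-7)) := by
  have hM : 0 ≤ N - 62 := by linarith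
  have hd : 0 ≤ C - 6/5 := by linarith
  nlinarith [mul_nonneg hM hd, mul_nonneg (mul_nonneg hM hM) hd, mul_nonneg hM (mul_nonneg hd hd),
    mul_nonneg (mul_nonneg hM hM) (mul_nonneg hd hd), mul_nonneg hd hd, mul_nonneg hM hM]

lemma scalar2 (N C : ℝ) (hN : 62 ≤ N) (hC : 6/5 ≤ C) :
    8*(N+3)*(N+7)*(N-7)*((N-8)*C+(N-5))*((N-8)*(N-6)*C^2+(N-9)*(N-6)*C-4*(N-7))
      < 9*((N+1)*(N+5)*(N-9)*(N-10))*C*((N-6)*C+(N-7))^2 := by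
  have hM : 0 ≤ N - 62 := by linarith
  have hd : 0 ≤ C - 6/5 := by linarith
  have h : ∀ i j : ℕ, 0 ≤ (N-62)^i * (C-6/5)^j :=
    fun i j => mul_nonneg (pow_nonneg hM i) (pow_nonneg hd j)
  nlinarith [h 0 1, h 0 2, h 0 3, h 1 0, h 1 1, h 1 2, h 1 3, h 2 0, h 2 1, h 2 2, h 2 3,
    h 3 0, h 3 1, h 3 2, h 3 3, h 4 0, h 4 1, h 4 2, h 4 3, h 5 0, h 5 1, h 5 2, h 5 3,
    h 6 0, h 6 1, h 6 2, h 6 3]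

lemma algebra_main (N C x v : ℝ) (hN : 62 ≤ N) (hC : 1 < C) (hv : 0 < v)
    (hiii : C^2*(N-6)*((N-8)*v - x) ≤ C*(N-7)*x + (N-5)*(N-7)*v) :
    8*(N+3)*(N+7)*((N-8)*v - x)*(C*x + (N-9)*v) < 9*((N+1)*(N+5)*(N-9)*(N-10))*v^2 := by
  have hv2 : 0 < v^2 := by positivity
  rcases le_or_gt C (6/5) with hC2 | hC2
  · have h1 := scalar1 N C hN hC.le hC2
    have f1 := mul_lt_mul_of_pos_right h1 hv2
    have f2 : 0 ≤ 8*(N+3)*(N+7) * (2*C*x - ((N-8)*C - (N-9))*v)^2 :=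
      mul_nonneg (by nlinarith : (0:ℝ) ≤ 8*(N+3)*(N+7)) (sq_nonneg _)
    have key : 4*C*(8*(N+3)*(N+7)*((N-8)*v - x)*(C*x + (N-9)*v))
        < 4*C*(9*((N+1)*(N+5)*(N-9)*(N-10))*v^2) := by linarith [f1, f2]
    have h4C : (0:ℝ) < 4*C := by linarith
    exact lt_of_mul_lt_mul_left key h4C.le
  · have hDpos : 0 < (N-6)*C+(N-7) := by nlinarith
    have hW := scalar3 N C hN hC2.le
    have ht : C*((N-6)*C+(N-7))*((N-8)*v - x) ≤ (N-7)*((N-8)*C+(N-5))*v := by linarith [hiii]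
    have hKD : 2*((N-7)*((N-8)*C+(N-5)))*v ≤ (((N-8)*C+(N-9))*((N-6)*C+(N-7)))*v :=
      mul_le_mul_of_nonneg_right hW hv.le
    have hstep : (C*((N-6)*C+(N-7))*((N-8)*v - x))
          * ((((N-8)*C+(N-9))*((N-6)*C+(N-7)))*v - C*((N-6)*C+(N-7))*((N-8)*v - x))
        ≤ ((N-7)*((N-8)*C+(N-5))*v)
          * ((((N-8)*C+(N-9))*((N-6)*C+(N-7)))*v - (N-7)*((N-8)*C+(N-5))*v) := by
      linarith [mul_nonneg (sub_nonneg.2 ht)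
        (by linarith : 0 ≤ (((N-8)*C+(N-9))*((N-6)*C+(N-7)))*v - (N-7)*((N-8)*C+(N-5))*v
            - C*((N-6)*C+(N-7))*((N-8)*v - x))]
    have h2 := scalar2 N C hN hC2.le
    have f3 := mul_lt_mul_of_pos_right h2 hv2
    have f4 := mul_le_mul_of_nonneg_left hstep (by nlinarith : (0:ℝ) ≤ 8*(N+3)*(N+7))
    have key : (C*((N-6)*C+(N-7))^2)*(8*(N+3)*(N+7)*((N-8)*v - x)*(C*x + (N-9)*v))
        < (C*((N-6)*C+(N-7))^2)*(9*((N+1)*(N+5)*(N-9)*(N-10))*v^2) := by linarith [f3, f4]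
    have hCD : (0:ℝ) < C*((N-6)*C+(N-7))^2 := by positivity
    exact lt_of_mul_lt_mul_left key hCD.le

lemma contAux (T k : ℝ) : Continuous fun t : ℝ => (1 + (t - T)^2) ^ (-k) := by
  have hb : ∀ t : ℝ, (0:ℝ) < 1 + (t - T)^2 := fun t => by positivity
  exact (by continuity : Continuous fun t : ℝ => 1 + (t - T)^2).rpow_const
    (fun t => Or.inl (hb t).ne')

lemma intAux (T : ℝ) (hT : T < 0) (k : ℝ) (hk : 1 ≤ k) :
    IntegrableOn (fun t : ℝ => (1 + (t - T)^2) ^ (-k)) (Set.Ioi 0) := by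
  have hb : ∀ t : ℝ, (0:ℝ) < 1 + (t - T)^2 := fun t => by positivity
  refine Integrable.mono' (integrable_inv_one_add_sq.integrableOn)
    ((contAux T k).aestronglyMeasurable.restrict) ?_
  filter_upwards [ae_restrict_mem measurableSet_Ioi] with t ht
  have h1 : (1:ℝ) ≤ 1 + (t - T)^2 := by nlinarith [sq_nonneg (t-T)]
  rw [Real.norm_eq_abs, abs_of_nonneg (Real.rpow_nonneg (hb t).le _)]
  calc (1 + (t-T)^2) ^ (-k) ≤ (1 + (t-T)^2) ^ (-1:ℝ) :=
        Real.rpow_le_rpow_of_exponent_le h1 (by linarith)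
    _ = (1 + (t-T)^2)⁻¹ := Real.rpow_neg_one _
    _ ≤ (1 + t^2)⁻¹ := by
        have ht' : (0:ℝ) < t := ht
        have : 1 + t^2 ≤ 1 + (t-T)^2 := by nlinarith
        exact inv_anti₀ (by positivity) this

lemma posAux (T : ℝ) (hT : T < 0) (k : ℝ) (hk : 1 ≤ k) :
    0 < ∫ t in Set.Ioi (0:ℝ), (1 + (t - T)^2) ^ (-k) := by
  have hb : ∀ t : ℝ, (0:ℝ) < 1 + (t - T)^2 := fun t => by positivity
  rw [setIntegral_pos_iff_support_of_nonneg_ae ?_ (intAux T hT k hk)]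
  · have hs : (Function.support fun t : ℝ => (1 + (t - T)^2) ^ (-k)) = Set.univ := by
      ext t
      simp only [Function.mem_support, Set.mem_univ, iff_true]
      exact (Real.rpow_pos_of_pos (hb t) _).ne'
    rw [hs, Set.univ_inter, Real.volume_Ioi]
    simp
  · filter_upwards with t
    exact Real.rpow_nonneg (hb t).le _

lemma compAux (T : ℝ) (hT : T < 0) (k : ℝ) (hk : 1 ≤ k) :
    (1+T^2)^2 * ∫ t in Set.Ioi (0:ℝ), (1 + (t-T)^2)^(-(k+2))
      ≤ ∫ t in Set.Ioi (0:ℝ), (1 + (t-T)^2)^(-k) := by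
  have hb : ∀ t : ℝ, (0:ℝ) < 1 + (t - T)^2 := fun t => by positivity
  rw [← MeasureTheory.integral_const_mul]
  apply setIntegral_mono_on ((intAux T hT (k+2) (by linarith)).const_mul _)
    (intAux T hT k hk) measurableSet_Ioi
  intro t ht
  have ht' : (0:ℝ) < t := ht
  have hle : 1 + T^2 ≤ 1 + (t-T)^2 := by nlinarith
  have e1 : (1 + (t-T)^2)^((2:ℕ):ℝ) * (1 + (t-T)^2)^(-(k+2)) = (1 + (t-T)^2)^(-k) := by
    rw [← Real.rpow_add (hb t)]
    congr 1
    push_cast; ring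
  calc (1+T^2)^2 * (1 + (t-T)^2)^(-(k+2))
      ≤ (1 + (t-T)^2)^2 * (1 + (t-T)^2)^(-(k+2)) := by
        apply mul_le_mul_of_nonneg_right _ (Real.rpow_nonneg (hb t).le _)
        exact pow_le_pow_left₀ (by positivity) hle 2
    _ = (1 + (t-T)^2)^(-k) := by rw [← e1, Real.rpow_natCast]

lemma recurAux (T : ℝ) (hT : T < 0) (k : ℝ) (hk : 2 ≤ k) :
    (2*k-1) * ∫ t in Set.Ioi (0:ℝ), (1 + (t - T)^2) ^ (-k)
      = (-T)*(1+T^2)^(-k) + 2*k * ∫ t in Set.Ioi (0:ℝ), (1 + (t - T)^2) ^ (-(k+1)) := by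
  have hb : ∀ t : ℝ, (0:ℝ) < 1 + (t - T)^2 := fun t => by positivity
  set g : ℝ → ℝ := fun t => (t - T) * (1 + (t - T)^2) ^ (-k) with hg
  set g' : ℝ → ℝ := fun t => (1-2*k) * (1 + (t - T)^2) ^ (-k)
      + 2*k * (1 + (t - T)^2) ^ (-(k+1)) with hg'
  have hderiv : ∀ x ∈ Set.Ici (0:ℝ), HasDerivAt g (g' x) x := by
    intro x _
    have h1 : HasDerivAt (fun t : ℝ => t - T) 1 x := (hasDerivAt_id x).sub_const T
    have h2 : HasDerivAt (fun t : ℝ => 1 + (t - T)^2) (2*(x-T)) x := by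
      have h := (h1.pow 2).const_add 1
      exact h.congr_deriv (by norm_num)
    have h3 : HasDerivAt (fun t : ℝ => (1 + (t - T)^2) ^ (-k))
        ((2*(x-T)) * (-k) * (1 + (x - T)^2) ^ (-k-1)) x :=
      h2.rpow_const (Or.inl (hb x).ne')
    have h4 := h1.mul h3
    refine h4.congr_deriv ?_
    have hbb : (1 + (x-T)^2) * (1 + (x-T)^2) ^ (-k-1) = (1 + (x-T)^2) ^ (-k) := by
      have h := Real.rpow_add (hb x) 1 (-k-1)
      rw [Real.rpow_one] at h
      rw [← h]
      congr 1
      ring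
    have hB2 : (1 + (x-T)^2) ^ (-(k+1)) = (1 + (x-T)^2) ^ (-k-1) := by
      congr 1; ring
    simp only [hg', hB2]
    linear_combination (-(2*k)) * hbb
  have htend : Tendsto g atTop (nhds 0) := by
    have h1 : Tendsto (fun t : ℝ => t - T) atTop atTop := by
      simpa [sub_eq_add_neg] using tendsto_atTop_add_const_right atTop (-T) tendsto_id
    have h2 := tendsto_rpow_neg_atTop (y := 2*k-1) (by linarith)
    have h0 : Tendsto (fun t : ℝ => (t - T) ^ (1-2*k)) atTop (𝓝 0) := by
      have h3 := h2.comp h1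
      have he : (fun t : ℝ => (t-T)^(1-2*k)) = (fun x : ℝ => x ^ (-(2*k-1))) ∘ (fun t => t - T) := by
        funext t
        simp only [Function.comp]
        congr 1
        ring
      rw [he]
      exact h3
    apply squeeze_zero' ?_ ?_ h0
    · filter_upwards [eventually_ge_atTop (0:ℝ)] with t ht
      have : 0 < t - T := by linarith
      exact mul_nonneg this.le (Real.rpow_nonneg (hb t).le _)
    · filter_upwards [eventually_ge_atTop (0:ℝ)] with t ht
      have hpos : 0 < t - T := by linarith
      have hb2 : (t-T)^2 ≤ 1 + (t-T)^2 := by linarith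
      have e1 : (1 + (t-T)^2) ^ (-k) ≤ ((t-T)^2) ^ (-k) :=
        Real.rpow_le_rpow_of_nonpos (by positivity) hb2 (by linarith)
      have e2 : (((t-T)^2 : ℝ)) ^ (-k) = (t-T) ^ (-(2*k)) := by
        rw [← Real.rpow_natCast (t-T) 2, ← Real.rpow_mul hpos.le]
        congr 1
        push_cast; ring
      have e3 : (t-T) * (t-T)^(-(2*k)) = (t-T)^(1-2*k) := by
        have h := Real.rpow_add hpos 1 (-(2*k))
        rw [Real.rpow_one] at h
        rw [← h]
        congr 1
      calc g t = (t-T) * (1 + (t-T)^2)^(-k) := rfl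
        _ ≤ (t-T) * ((t-T)^2)^(-k) := mul_le_mul_of_nonneg_left e1 hpos.le
        _ = (t-T)^(1-2*k) := by rw [e2, e3]
  have hint : IntegrableOn g' (Set.Ioi 0) :=
    ((intAux T hT k (by linarith)).const_mul (1-2*k)).add
      ((intAux T hT (k+1) (by linarith)).const_mul (2*k))
  have hFTC := integral_Ioi_of_hasDerivAt_of_tendsto' hderiv hint htend
  have hsplit : ∫ t in Set.Ioi (0:ℝ), g' t
      = (1-2*k) * (∫ t in Set.Ioi (0:ℝ), (1+(t-T)^2)^(-k))
        + 2*k * ∫ t in Set.Ioi (0:ℝ), (1+(t-T)^2)^(-(k+1)) := by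
    simp only [hg']
    rw [integral_add ((intAux T hT k (by linarith)).const_mul (1-2*k))
      ((intAux T hT (k+1) (by linarith)).const_mul (2*k)),
      MeasureTheory.integral_const_mul, MeasureTheory.integral_const_mul]
  have hg0 : g 0 = (-T) * (1+T^2)^(-k) := by
    simp only [hg]
    rw [show (0:ℝ) - T = -T by ring, neg_sq]
  rw [hFTC, hg0] at hsplit
  linarith [hsplit]

end JAux

/-- For `T < 0`, `n ≥ 62` and the explicit choice of `a₀`,
`−(2(n+3)/(n−5))c₀a₀ + (3(n+3)(n+5)/((n−5)(n−7)))c₁ < 0`, i.e. `J(1) < 0`. -/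
theorem J_one_negative (T : ℝ) (hT : T < 0) (n : ℕ) (hn : 62 ≤ n)
    (c : ℕ → ℝ)
    (hc : ∀ m : ℕ, c m
      = ∫ t in Set.Ioi (0 : ℝ), (1 + (t - T) ^ 2) ^ ((5 + 2 * (m : ℝ) - (n : ℝ)) / 2))
    (a₀ : ℝ)
    (ha₀ : a₀ = (((n : ℝ) + 3) * c 1 / (2 * ((n : ℝ) - 7) * c 0))
      * (3 + Real.sqrt (9 - 8 * (((n : ℝ) + 7) * ((n : ℝ) - 7)
          / (((n : ℝ) + 3) * ((n : ℝ) - 9))) * (c 0 * c 2 / c 1 ^ 2)))) :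
    -(2 * ((n : ℝ) + 3) / ((n : ℝ) - 5)) * c 0 * a₀
      + (3 * ((n : ℝ) + 3) * ((n : ℝ) + 5) / (((n : ℝ) - 5) * ((n : ℝ) - 7))) * c 1 < 0 := by
  have hb : ∀ t : ℝ, (0:ℝ) < 1 + (t - T)^2 := fun t => by positivity
  set N : ℝ := (n : ℝ) with hNdef
  have hN : (62:ℝ) ≤ N := by rw [hNdef]; exact_mod_cast hn
  have hC : (1:ℝ) < 1 + T^2 := by nlinarith [sq_nonneg T]
  set p : ℝ := (N - 5)/2 with hp
  have h0 : c 0 = ∫ t in Set.Ioi (0:ℝ), (1 + (t - T)^2) ^ (-p) := by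
    rw [hc 0]
    congr 1
    funext t
    congr 1
    rw [hp]; push_cast; ring
  have h1 : c 1 = ∫ t in Set.Ioi (0:ℝ), (1 + (t - T)^2) ^ (-(p-1)) := by
    rw [hc 1]
    congr 1
    funext t
    congr 1
    rw [hp]; push_cast; ring
  have h2 : c 2 = ∫ t in Set.Ioi (0:ℝ), (1 + (t - T)^2) ^ (-(p-2)) := by
    rw [hc 2]
    congr 1
    funext t
    congr 1
    rw [hp]; push_cast; ring
  have R1 := recurAux T hT (p-1) (by rw [hp]; linarith)
  rw [show p - 1 + 1 = p from by ring] at R1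
  have R2 := recurAux T hT (p-2) (by rw [hp]; linarith)
  rw [show p - 2 + 1 = p - 1 from by ring] at R2
  have R3 := recurAux T hT p (by rw [hp]; linarith)
  have CMP := compAux T hT (p-1) (by rw [hp]; linarith)
  rw [show p - 1 + 2 = p + 1 from by ring] at CMP
  rw [← h0, ← h1] at R1
  rw [← h1, ← h2] at R2
  rw [← h0] at R3
  rw [← h1] at CMP
  have P0 : 0 < c 0 := by rw [h0]; exact posAux T hT p (by rw [hp]; linarith)
  have P1 : 0 < c 1 := by rw [h1]; exact posAux T hT (p-1) (by rw [hp]; linarith)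
  have Ppl : 0 ≤ ∫ t in Set.Ioi (0:ℝ), (1 + (t - T)^2) ^ (-(p+1)) := by
    apply setIntegral_nonneg measurableSet_Ioi
    intro t _
    exact Real.rpow_nonneg (hb t).le _
  have hB1pos : 0 < (-T)*(1+T^2)^(-(p-1)) :=
    mul_pos (by linarith) (Real.rpow_pos_of_pos (by positivity) _)
  have hBp : (1+T^2) * ((-T)*(1+T^2)^(-p)) = (-T)*(1+T^2)^(-(p-1)) := by
    have h := Real.rpow_add (show (0:ℝ) < 1+T^2 by positivity) 1 (-p)
    rw [Real.rpow_one] at h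
    rw [show -(p-1) = 1 + -p from by ring, h]
    ring
  have hBp2 : (-T)*(1+T^2)^(-(p-2)) = (1+T^2) * ((-T)*(1+T^2)^(-(p-1))) := by
    have h := Real.rpow_add (show (0:ℝ) < 1+T^2 by positivity) 1 (-(p-1))
    rw [Real.rpow_one] at h
    rw [show -(p-2) = 1 + -(p-1) from by ring, h]
    ring
  rw [hBp2] at R2
  -- convert coefficients to N-form
  rw [show 2*(p-1)-1 = N-8 from by rw [hp]; ring, show 2*(p-1) = N-7 from by rw [hp]; ring] at R1
  rw [show 2*(p-2)-1 = N-10 from by rw [hp]; ring, show 2*(p-2) = N-9 from by rw [hp]; ring] at R2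
  rw [show 2*p-1 = N-6 from by rw [hp]; ring, show 2*p = N-5 from by rw [hp]; ring] at R3
  -- step1 : (1+T²)²(N-6)c0 ≤ (1+T²)b1 + (N-5)c1
  have step1 : (1+T^2)^2*((N-6)*(c 0)) ≤ (1+T^2)*((-T)*(1+T^2)^(-(p-1))) + (N-5)*(c 1) := by
    calc (1+T^2)^2*((N-6)*(c 0))
        = (1+T^2)*((1+T^2)*((-T)*(1+T^2)^(-p)))
          + (N-5)*((1+T^2)^2 * ∫ t in Set.Ioi (0:ℝ), (1 + (t - T)^2) ^ (-(p+1))) := by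
          rw [R3]; ring
      _ = (1+T^2)*((-T)*(1+T^2)^(-(p-1)))
          + (N-5)*((1+T^2)^2 * ∫ t in Set.Ioi (0:ℝ), (1 + (t - T)^2) ^ (-(p+1))) := by
          rw [hBp]
      _ ≤ (1+T^2)*((-T)*(1+T^2)^(-(p-1))) + (N-5)*(c 1) := by
          have := mul_le_mul_of_nonneg_left CMP (show (0:ℝ) ≤ N-5 by linarith)
          linarith
  have h4 : (N-8)*(c 1) - (-T)*(1+T^2)^(-(p-1)) = (N-7)*(c 0) := by linarith [R1]
  have hiii : (1+T^2)^2*(N-6)*((N-8)*(c 1) - (-T)*(1+T^2)^(-(p-1)))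
      ≤ (1+T^2)*(N-7)*((-T)*(1+T^2)^(-(p-1))) + (N-5)*(N-7)*(c 1) := by
    rw [h4]
    calc (1+T^2)^2*(N-6)*((N-7)*(c 0)) = (N-7)*((1+T^2)^2*((N-6)*(c 0))) := by ring
      _ ≤ (N-7)*((1+T^2)*((-T)*(1+T^2)^(-(p-1))) + (N-5)*(c 1)) :=
          mul_le_mul_of_nonneg_left step1 (by linarith)
      _ = (1+T^2)*(N-7)*((-T)*(1+T^2)^(-(p-1))) + (N-5)*(N-7)*(c 1) := by ring
  have halg := algebra_main N (1+T^2) ((-T)*(1+T^2)^(-(p-1))) (c 1) hN hC P1 hiii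
  have hprod : 8*(N+3)*(N+7)*((N-7)*(c 0))*((N-10)*(c 2))
      < 9*((N+1)*(N+5)*(N-9)*(N-10))*(c 1)^2 := by
    rw [← h4, R2]
    linarith [halg]
  -- division chain
  have hden : (0:ℝ) < (N+3)^2*(N-9)*(N-10)*(c 1)^2 :=
    mul_pos (mul_pos (mul_pos (pow_pos (by linarith) 2) (by linarith)) (by linarith))
      (pow_pos P1 2)
  have hne3 : (N+3) ≠ 0 := by linarith
  have hne9 : (N-9) ≠ 0 := by linarith
  have hne10 : (N-10) ≠ 0 := by linarith
  have hc1ne : c 1 ≠ 0 := ne_of_gt P1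
  have e1 : 8 * ((N+7) * (N-7) / ((N+3) * (N-9))) * (c 0 * c 2 / c 1 ^ 2)
      = (8*(N+3)*(N+7)*((N-7)*(c 0))*((N-10)*(c 2)))/((N+3)^2*(N-9)*(N-10)*(c 1)^2) := by
    field_simp
  have e2 : 9 - 36/(N+3)^2
      = (9*((N+1)*(N+5)*(N-9)*(N-10))*(c 1)^2)/((N+3)^2*(N-9)*(N-10)*(c 1)^2) := by
    field_simp
    ring
  have hlt : 8 * ((N+7) * (N-7) / ((N+3) * (N-9))) * (c 0 * c 2 / c 1 ^ 2) < 9 - 36/(N+3)^2 := by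
    rw [e1, e2]
    exact (div_lt_div_iff_of_pos_right hden).2 hprod
  have hS : 36/(N+3)^2 < 9 - 8 * ((N+7) * (N-7) / ((N+3) * (N-9))) * (c 0 * c 2 / c 1 ^ 2) := by
    linarith
  have hsq : 6/(N+3)
      < Real.sqrt (9 - 8 * ((N+7) * (N-7) / ((N+3) * (N-9))) * (c 0 * c 2 / c 1 ^ 2)) := by
    apply Real.lt_sqrt_of_sq_lt
    rw [div_pow]
    norm_num
    linarith [hS]
  have h6 : 6 < (N+3) * Real.sqrt (9 - 8 * ((N+7) * (N-7) / ((N+3) * (N-9))) * (c 0 * c 2 / c 1 ^ 2)) := by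
    rw [div_lt_iff₀ (by linarith : (0:ℝ) < N+3)] at hsq
    linarith [hsq]
  rw [ha₀]
  set s : ℝ := Real.sqrt (9 - 8 * ((N+7) * (N-7) / ((N+3) * (N-9))) * (c 0 * c 2 / c 1 ^ 2)) with hsdef
  have hne5 : (N-5) ≠ 0 := by linarith
  have hne7 : (N-7) ≠ 0 := by linarith
  have hc0ne : c 0 ≠ 0 := ne_of_gt P0
  have heq : -(2 * (N + 3) / (N - 5)) * c 0 * ((N + 3) * c 1 / (2 * (N - 7) * c 0)
        * (3 + s))
      + 3 * (N + 3) * (N + 5) / ((N - 5) * (N - 7)) * c 1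
      = ((N+3) * c 1 / ((N-5)*(N-7))) * (6 - (N+3) * s) := by
    field_simp
    ring
  rw [heq]
  apply mul_neg_of_pos_of_neg
  · exact div_pos (mul_pos (by linarith) P1) (mul_pos (by linarith) (by linarith))
  · linarith
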